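/- (Probe observable compatibility.) In the intervention model, the probe observable M̃(τ) = Ũ(τ,0)* (I ⊗ I ⊗ M) Ũ(τ,0) commutes with every output quadrature Ỹ_k(t) for all times t in [0,T], both before and after τ. -/

import Mathlib

open Matrix Kronecker BigOperators

lemma kron_conjTranspose {l m n p : Type*} (A : Matrix l m ℂ) (B : Matrix n p ℂ) :
    (A ⊗ₖ B)ᴴ = Aᴴ ⊗ₖ Bᴴ := by
  ext ⟨i1, i2⟩ ⟨j1, j2⟩
  simp [conjTranspose_apply, mul_comm]

lemma conj_commute' {m : Type*} [Fintype m] [DecidableEq m]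
    {A B P : Matrix m m ℂ} (h : Commute A B) (hP : P * Pᴴ = 1) :
    Commute (Pᴴ * A * P) (Pᴴ * B * P) := by
  have key : ∀ X Y : Matrix m m ℂ, (Pᴴ * X * P) * (Pᴴ * Y * P) = Pᴴ * (X * Y) * P := by
    intro X Y
    calc (Pᴴ * X * P) * (Pᴴ * Y * P) = Pᴴ * X * (P * Pᴴ) * Y * P := by
          simp only [Matrix.mul_assoc]
      _ = Pᴴ * (X * Y) * P := by rw [hP]; simp only [Matrix.mul_one, Matrix.mul_assoc]
  unfold Commute SemiconjBy
  rw [key, key, h.eq]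

lemma commute_kron_one_one_kron {m p : Type*} [Fintype m] [Fintype p]
    [DecidableEq m] [DecidableEq p] (A : Matrix m m ℂ) (M : Matrix p p ℂ) :
    Commute (A ⊗ₖ (1 : Matrix p p ℂ)) ((1 : Matrix m m ℂ) ⊗ₖ M) := by
  unfold Commute SemiconjBy
  rw [← Matrix.mul_kronecker_mul, ← Matrix.mul_kronecker_mul, Matrix.one_mul,
    Matrix.mul_one, Matrix.one_mul, Matrix.mul_one]

lemma commute_conjTranspose {m : Type*} [Fintype m]
    {A B : Matrix m m ℂ} (h : Commute A B) : Commute Aᴴ Bᴴ := by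
  unfold Commute SemiconjBy
  rw [← Matrix.conjTranspose_mul, ← Matrix.conjTranspose_mul, h.eq]

theorem probe_observable_compatible {n f p T : ℕ} {K : Type*} [Fintype K]
    (τ : ℕ) (hτT : τ ≤ T)
    (U : ℕ → ℕ → Matrix (Fin n × Fin f) (Fin n × Fin f) ℂ)
    (hUuni : ∀ s t, s ≤ t → t ≤ T → U t s ∈ Matrix.unitaryGroup (Fin n × Fin f) ℂ)
    (hUid : ∀ t, U t t = 1)
    (hflow : ∀ t₁ t₂ t₃, t₁ ≤ t₂ → t₂ ≤ t₃ → t₃ ≤ T →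
      U t₃ t₂ * U t₂ t₁ = U t₃ t₁)
    (V : Matrix ((Fin n × Fin f) × Fin p) ((Fin n × Fin f) × Fin p) ℂ)
    (hVuni : V ∈ Matrix.unitaryGroup ((Fin n × Fin f) × Fin p) ℂ)
    (hVF : ∀ F₀ : Matrix (Fin f) (Fin f) ℂ,
      Commute V (((1 : Matrix (Fin n) (Fin n) ℂ) ⊗ₖ F₀) ⊗ₖ
        (1 : Matrix (Fin p) (Fin p) ℂ)))
    (Ut : ℕ → ℕ → Matrix ((Fin n × Fin f) × Fin p) ((Fin n × Fin f) × Fin p) ℂ)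
    (hUt1 : ∀ t, t < τ →
      Ut t 0 = U t 0 ⊗ₖ (1 : Matrix (Fin p) (Fin p) ℂ))
    (hUt2 : ∀ t, τ ≤ t →
      Ut t 0 = (U t τ ⊗ₖ (1 : Matrix (Fin p) (Fin p) ℂ)) * V *
        (U τ 0 ⊗ₖ (1 : Matrix (Fin p) (Fin p) ℂ)))
    (hUt3 : ∀ t s, s ≤ t → Ut t s = Ut t 0 * (Ut s 0)ᴴ)
    (Z : K → ℕ → Matrix (Fin f) (Fin f) ℂ)
    (hZherm : ∀ k t, (Z k t).IsHermitian)
    (hZcomm : ∀ j k t s, Commute (Z j t) (Z k s))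
    (hUZ : ∀ k u s t, u ≤ s → s ≤ t → t ≤ T →
      Commute (U t s) ((1 : Matrix (Fin n) (Fin n) ℂ) ⊗ₖ Z k u))
    (hVZ : ∀ k u, Commute V (((1 : Matrix (Fin n) (Fin n) ℂ) ⊗ₖ Z k u) ⊗ₖ
      (1 : Matrix (Fin p) (Fin p) ℂ)))
    (Yt : K → ℕ → Matrix ((Fin n × Fin f) × Fin p) ((Fin n × Fin f) × Fin p) ℂ)
    (hYt : ∀ k t, Yt k t = (Ut t 0)ᴴ *
      (((1 : Matrix (Fin n) (Fin n) ℂ) ⊗ₖ Z k t) ⊗ₖ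
        (1 : Matrix (Fin p) (Fin p) ℂ)) * Ut t 0)
    (M : Matrix (Fin p) (Fin p) ℂ) (hM : M.IsHermitian)
    (Mt : Matrix ((Fin n × Fin f) × Fin p) ((Fin n × Fin f) × Fin p) ℂ)
    (hMt : Mt = (Ut τ 0)ᴴ *
      ((1 : Matrix (Fin n × Fin f) (Fin n × Fin f) ℂ) ⊗ₖ M) * Ut τ 0) :
    ∀ k t, t ≤ T → Commute Mt (Yt k t) := by
  intro k t htT
  set W : Matrix ((Fin n × Fin f) × Fin p) ((Fin n × Fin f) × Fin p) ℂ :=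
    ((1 : Matrix (Fin n) (Fin n) ℂ) ⊗ₖ Z k t) ⊗ₖ (1 : Matrix (Fin p) (Fin p) ℂ) with hW
  -- basic facts
  have star_eq : ∀ (A : Matrix (Fin n × Fin f) (Fin n × Fin f) ℂ), star A = Aᴴ :=
    fun A => rfl
  have kron1H : ∀ (A : Matrix (Fin n × Fin f) (Fin n × Fin f) ℂ),
      (A ⊗ₖ (1 : Matrix (Fin p) (Fin p) ℂ))ᴴ = Aᴴ ⊗ₖ (1 : Matrix (Fin p) (Fin p) ℂ) := by
    intro A; rw [kron_conjTranspose, Matrix.conjTranspose_one]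
  have kronuni : ∀ (A : Matrix (Fin n × Fin f) (Fin n × Fin f) ℂ), A * Aᴴ = 1 →
      (A ⊗ₖ (1 : Matrix (Fin p) (Fin p) ℂ)) * (A ⊗ₖ (1 : Matrix (Fin p) (Fin p) ℂ))ᴴ = 1 := by
    intro A hA
    rw [kron1H, ← Matrix.mul_kronecker_mul, hA, Matrix.mul_one, Matrix.one_kronecker_one]
  have hVVH : V * Vᴴ = 1 := hVuni.2
  have hUτ0 : U τ 0 * (U τ 0)ᴴ = 1 := (hUuni 0 τ (Nat.zero_le _) hτT).2
  set P : Matrix ((Fin n × Fin f) × Fin p) ((Fin n × Fin f) × Fin p) ℂ :=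
    U τ 0 ⊗ₖ (1 : Matrix (Fin p) (Fin p) ℂ) with hPdef
  have hPuni : P * Pᴴ = 1 := kronuni _ hUτ0
  have hUtτ : Ut τ 0 = V * P := by
    rw [hUt2 τ le_rfl, hUid τ, Matrix.one_kronecker_one, Matrix.one_mul]
  -- W commutes with 1 ⊗ M
  have hWM : Commute W ((1 : Matrix (Fin n × Fin f) (Fin n × Fin f) ℂ) ⊗ₖ M) :=
    commute_kron_one_one_kron _ M
  -- W is Hermitian
  have hWherm : Wᴴ = W := by
    rw [hW, kron_conjTranspose, kron_conjTranspose, Matrix.conjTranspose_one,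
      Matrix.conjTranspose_one, (hZherm k t).eq]
  have hWV : Commute W V := (hVZ k t).symm
  have hWVH : Commute W Vᴴ := by
    have := commute_conjTranspose (hVZ k t)
    rw [hWherm] at this
    exact this.symm
  have hMeq : Mt = Pᴴ * (Vᴴ * ((1 : Matrix (Fin n × Fin f) (Fin n × Fin f) ℂ) ⊗ₖ M) * V) * P := by
    rw [hMt, hUtτ, Matrix.conjTranspose_mul]
    simp only [Matrix.mul_assoc]
  rcases lt_or_ge t τ with ht | ht
  · -- case t < τ
    have htτ : t ≤ τ := le_of_lt ht
    -- Ut t 0 = (U τ t ⊗ 1)ᴴ * P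
    have hflow' : U τ t * U t 0 = U τ 0 := hflow 0 t τ (Nat.zero_le _) htτ hτT
    have hUτt : (U τ t)ᴴ * U τ t = 1 := by
      have := (hUuni t τ htτ hτT).1
      rwa [star_eq] at this
    have hQ : U t 0 ⊗ₖ (1 : Matrix (Fin p) (Fin p) ℂ) =
        (U τ t ⊗ₖ (1 : Matrix (Fin p) (Fin p) ℂ))ᴴ * P := by
      rw [kron1H, hPdef, ← Matrix.mul_kronecker_mul, Matrix.mul_one]
      congr 1
      rw [← hflow', ← Matrix.mul_assoc, hUτt, Matrix.one_mul]
    -- (U τ t ⊗ 1) commutes with W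
    have hcomm : Commute (U τ t ⊗ₖ (1 : Matrix (Fin p) (Fin p) ℂ)) W := by
      have h := hUZ k t t τ le_rfl htτ hτT
      rw [hW]
      unfold Commute SemiconjBy
      simp only [← Matrix.mul_kronecker_mul, Matrix.one_mul, Matrix.mul_one, h.eq]
    have hUτtkron : (U τ t ⊗ₖ (1 : Matrix (Fin p) (Fin p) ℂ)) *
        (U τ t ⊗ₖ (1 : Matrix (Fin p) (Fin p) ℂ))ᴴ = 1 :=
      kronuni _ (hUuni t τ htτ hτT).2
    have hYeq : Yt k t = Pᴴ * W * P := by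
      rw [hYt, hUt1 t ht, hQ, Matrix.conjTranspose_mul, Matrix.conjTranspose_conjTranspose]
      calc Pᴴ * (U τ t ⊗ₖ (1 : Matrix (Fin p) (Fin p) ℂ)) * W *
            ((U τ t ⊗ₖ (1 : Matrix (Fin p) (Fin p) ℂ))ᴴ * P)
          = Pᴴ * ((U τ t ⊗ₖ (1 : Matrix (Fin p) (Fin p) ℂ)) * W *
            (U τ t ⊗ₖ (1 : Matrix (Fin p) (Fin p) ℂ))ᴴ) * P := by
            simp only [Matrix.mul_assoc]
        _ = Pᴴ * W * P := by
            rw [hcomm.eq, Matrix.mul_assoc W, hUτtkron, Matrix.mul_one]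
    rw [hMeq, hYeq]
    exact conj_commute' ((hWVH.mul_right hWM).mul_right hWV).symm hPuni
  · -- case τ ≤ t
    have ha : Commute ((1 : Matrix (Fin n × Fin f) (Fin n × Fin f) ℂ) ⊗ₖ M)
        ((U t τ ⊗ₖ (1 : Matrix (Fin p) (Fin p) ℂ))ᴴ) := by
      rw [kron1H]
      exact (commute_kron_one_one_kron _ M).symm
    have hc : Commute ((1 : Matrix (Fin n × Fin f) (Fin n × Fin f) ℂ) ⊗ₖ M)
        (U t τ ⊗ₖ (1 : Matrix (Fin p) (Fin p) ℂ)) :=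
      (commute_kron_one_one_kron _ M).symm
    have hYeq : Yt k t = Pᴴ * (Vᴴ * ((U t τ ⊗ₖ (1 : Matrix (Fin p) (Fin p) ℂ))ᴴ * W *
        (U t τ ⊗ₖ (1 : Matrix (Fin p) (Fin p) ℂ))) * V) * P := by
      rw [hYt, hUt2 t ht, Matrix.conjTranspose_mul, Matrix.conjTranspose_mul]
      simp only [Matrix.mul_assoc]
      rfl
    rw [hMeq, hYeq]
    exact conj_commute' (conj_commute' ((ha.mul_right hWM.symm).mul_right hc) hVVH) hPuni
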